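/- For a shellable pure (d-1)-dimensional simplicial complex with shelling order F_1,...,F_m and restriction faces r(F_j), the h-vector satisfies h_i = #{j : |r(F_j)| = i} for all 0 ≤ i ≤ d. -/

import Mathlib

/-- The `h`-vector entries of a `(d-1)`-dimensional complex from the face
numbers: here `f j` denotes `f_{j-1}` (so `f 0 = f_{-1} = 1`), and
`h_i = ∑_{j=0}^{i} (-1)^{i-j} C(d-j, i-j) f_{j-1}`. -/
def hvec (d : ℕ) (f : ℕ → ℤ) (i : ℕ) : ℤ :=
  ∑ j ∈ Finset.range (i + 1), (-1 : ℤ) ^ (i - j) * (Nat.choose (d - j) (i - j) : ℤ) * f j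

section Aux
open Finset

lemma key1 (n a : ℕ) (ha : a ≤ n) :
    ∑ t ∈ range (a + 1), (-1 : ℤ) ^ (a - t) * ((n - t).choose (a - t) : ℤ) * (n.choose t : ℤ)
      = if a = 0 then 1 else 0 := by
  have h1 : ∀ t ∈ range (a + 1),
      (-1 : ℤ) ^ (a - t) * ((n - t).choose (a - t) : ℤ) * (n.choose t : ℤ)
        = (n.choose a : ℤ) * ((-1) ^ a * ((-1) ^ t * (a.choose t : ℤ))) := by
    intro t ht
    rw [mem_range, Nat.lt_succ_iff] at ht
    have hc : n.choose a * a.choose t = n.choose t * (n - t).choose (a - t) :=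
      Nat.choose_mul ht
    have hs : (-1 : ℤ) ^ (a - t) = (-1) ^ a * (-1) ^ t := by
      have : (-1 : ℤ) ^ (a - t) * (-1) ^ t = (-1) ^ a := by
        rw [← pow_add, Nat.sub_add_cancel ht]
      calc (-1 : ℤ) ^ (a - t) = (-1 : ℤ) ^ (a - t) * ((-1) ^ t * (-1) ^ t) := by
              rw [← pow_add, ← two_mul, pow_mul]; norm_num
        _ = (-1) ^ a * (-1) ^ t := by rw [← mul_assoc, this]
    have hc' : ((n - t).choose (a - t) : ℤ) * (n.choose t : ℤ)
        = (n.choose a : ℤ) * (a.choose t : ℤ) := by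
      rw [mul_comm]; exact_mod_cast hc.symm
    rw [hs]
    linear_combination ((-1:ℤ) ^ t * (-1:ℤ) ^ a) * hc'
  rw [Finset.sum_congr rfl h1, ← Finset.mul_sum, ← Finset.mul_sum,
    Int.alternating_sum_range_choose]
  split_ifs with h
  · subst h; simp
  · simp

lemma key2 {V : Type*} [Fintype V] [DecidableEq V] (t u : Finset V) (htu : t ⊆ u) (k : ℕ) :
    (univ.powerset.filter (fun s : Finset V => s.card = k ∧ t ⊆ s ∧ s ⊆ u)).card
      = if t.card ≤ k then (u.card - t.card).choose (k - t.card) else 0 := by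
  split_ifs with h
  · rw [← Finset.card_sdiff_of_subset htu, ← Finset.card_powersetCard (k - t.card) (u \ t)]
    apply Finset.card_bij (fun s _ => s \ t)
    · intro s hs
      simp only [mem_filter, mem_powerset, mem_powersetCard] at *
      obtain ⟨-, hk, hts, hsu⟩ := hs
      constructor
      · exact fun x hx => by
          simp only [mem_sdiff] at *
          exact ⟨hsu hx.1, hx.2⟩
      · rw [Finset.card_sdiff_of_subset hts, hk]
    · intro s₁ h₁ s₂ h₂ he
      simp only [mem_filter, mem_powerset] at h₁ h₂
      have e1 : s₁ = (s₁ \ t) ∪ t := by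
        rw [Finset.sdiff_union_of_subset h₁.2.2.1]
      have e2 : s₂ = (s₂ \ t) ∪ t := by
        rw [Finset.sdiff_union_of_subset h₂.2.2.1]
      rw [e1, e2, he]
    · intro w hw
      simp only [mem_powersetCard] at hw
      refine ⟨w ∪ t, ?_, ?_⟩
      · have hdisj : Disjoint w t := by
          refine Finset.disjoint_left.mpr fun x hx hxt => ?_
          exact (Finset.mem_sdiff.mp (hw.1 hx)).2 hxt
        simp only [mem_filter, mem_powerset]
        refine ⟨subset_univ _, ?_, subset_union_right, ?_⟩
        · rw [Finset.card_union_of_disjoint hdisj, hw.2, Nat.sub_add_cancel h]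
        · exact union_subset (fun x hx => (Finset.mem_sdiff.mp (hw.1 hx)).1) htu
      · rw [Finset.union_sdiff_right, Finset.sdiff_eq_self_iff_disjoint]
        refine Finset.disjoint_left.mpr fun x hx hxt => ?_
        exact (Finset.mem_sdiff.mp (hw.1 hx)).2 hxt
  · rw [Finset.card_eq_zero, Finset.filter_eq_empty_iff]
    intro s _
    rintro ⟨hk, hts, -⟩
    exact h (hk ▸ Finset.card_le_card hts)

end Aux

open Finset in
/-- For a shellable pure `(d-1)`-dimensional complex with shelling order
`F 0, …, F (m-1)` and restriction faces `r j` (the unique minimal new face at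
each step), the `h`-vector satisfies `h_i = #{j : |r(F_j)| = i}` for `0 ≤ i ≤ d`.
Here the complex consists of all subsets of the facets `F j`, and a face is new
at step `j` if it lies in `F j` but in no earlier facet. -/
theorem stmt12 {V : Type*} [Fintype V] [DecidableEq V] (d m : ℕ) (hm : 0 < m)
    (F : Fin m → Finset V) (hpure : ∀ j, (F j).card = d)
    (r : Fin m → Finset V)
    (hshell : ∀ j : Fin m,
      (r j ⊆ F j ∧ ∀ i, i < j → ¬ r j ⊆ F i) ∧
      ∀ s : Finset V, s ⊆ F j → (∀ i, i < j → ¬ s ⊆ F i) → r j ⊆ s)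
    (f : ℕ → ℤ)
    (hf : ∀ k, f k =
      ((univ.powerset.filter (fun s : Finset V => s.card = k ∧ ∃ j, s ⊆ F j)).card : ℤ)) :
    ∀ i, i ≤ d →
      hvec d f i = ((univ.filter (fun j : Fin m => (r j).card = i)).card : ℤ) := by
  intro i hi
  -- the "birth index" of a face
  set g : Finset V → Fin m := fun s =>
    if h : (univ.filter fun j => s ⊆ F j).Nonempty then (univ.filter fun j => s ⊆ F j).min' h
    else ⟨0, hm⟩ with hg
  -- decompose the face count fiberwise
  have hfib : ∀ k, f k = ∑ j : Fin m,
      (if (r j).card ≤ k then ((d - (r j).card).choose (k - (r j).card) : ℤ) else 0) := by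
    intro k
    rw [hf k]
    have hcard := Finset.card_eq_sum_card_fiberwise
      (f := g)
      (s := univ.powerset.filter (fun s : Finset V => s.card = k ∧ ∃ j, s ⊆ F j))
      (t := univ) (fun x _ => mem_univ _)
    rw [hcard]
    push_cast
    refine Finset.sum_congr rfl fun j _ => ?_
    have hfe : ((univ.powerset.filter (fun s : Finset V => s.card = k ∧ ∃ j, s ⊆ F j)).filter
          (fun s => g s = j))
        = univ.powerset.filter (fun s : Finset V => s.card = k ∧ r j ⊆ s ∧ s ⊆ F j) := by
      ext s
      simp only [mem_filter, mem_powerset, subset_univ, true_and]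
      constructor
      · rintro ⟨⟨hk, j', hj'⟩, hgs⟩
        have hne : (univ.filter fun j => s ⊆ F j).Nonempty :=
          ⟨j', by simp [hj']⟩
        rw [hg] at hgs
        simp only [dif_pos hne] at hgs
        have hmem : j ∈ univ.filter fun j => s ⊆ F j := hgs ▸ Finset.min'_mem _ hne
        have hsFj : s ⊆ F j := (Finset.mem_filter.mp hmem).2
        have hnot : ∀ i, i < j → ¬ s ⊆ F i := by
          intro i hij hsi
          have : j ≤ i := hgs ▸ Finset.min'_le _ i (by simp [hsi])
          exact absurd hij (not_lt.mpr this)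
        exact ⟨hk, (hshell j).2 s hsFj hnot, hsFj⟩
      · rintro ⟨hk, hrs, hsF⟩
        have hne : (univ.filter fun j' => s ⊆ F j').Nonempty := ⟨j, by simp [hsF]⟩
        refine ⟨⟨hk, j, hsF⟩, ?_⟩
        rw [hg]
        simp only [dif_pos hne]
        have hle : (univ.filter fun j' => s ⊆ F j').min' hne ≤ j :=
          Finset.min'_le _ j (by simp [hsF])
        rcases lt_or_eq_of_le hle with hlt | heq
        · exfalso
          have hmem := Finset.min'_mem _ hne
          have hsub : s ⊆ F ((univ.filter fun j' => s ⊆ F j').min' hne) :=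
            (Finset.mem_filter.mp hmem).2
          exact (hshell j).1.2 _ hlt (hrs.trans hsub)
        · exact heq
    rw [hfe, key2 (r j) (F j) (hshell j).1.1 k, hpure j]
    split_ifs <;> simp
  -- now compute
  rw [hvec]
  have : ∑ k ∈ range (i + 1), (-1 : ℤ) ^ (i - k) * ((d - k).choose (i - k) : ℤ) * f k
      = ∑ j : Fin m, ∑ k ∈ range (i + 1), (-1 : ℤ) ^ (i - k) * ((d - k).choose (i - k) : ℤ) *
          (if (r j).card ≤ k then ((d - (r j).card).choose (k - (r j).card) : ℤ) else 0) := by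
    rw [Finset.sum_comm]
    exact Finset.sum_congr rfl fun k _ => by rw [hfib k, Finset.mul_sum]
  rw [this]
  have hinner : ∀ j : Fin m,
      ∑ k ∈ range (i + 1), (-1 : ℤ) ^ (i - k) * ((d - k).choose (i - k) : ℤ) *
          (if (r j).card ≤ k then ((d - (r j).card).choose (k - (r j).card) : ℤ) else 0)
        = if (r j).card = i then 1 else 0 := by
    intro j
    set ρ := (r j).card with hρ
    have hρd : ρ ≤ d := by
      rw [hρ, ← hpure j]; exact Finset.card_le_card (hshell j).1.1
    by_cases hρi : ρ ≤ i
    · rw [← Finset.sum_range_add_sum_Ico _ (Nat.le_succ_of_le hρi)]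
      have h0 : ∑ k ∈ range ρ, (-1 : ℤ) ^ (i - k) * ((d - k).choose (i - k) : ℤ) *
          (if ρ ≤ k then ((d - ρ).choose (k - ρ) : ℤ) else 0) = 0 := by
        refine Finset.sum_eq_zero fun k hk => ?_
        rw [mem_range] at hk
        rw [if_neg (not_le.mpr hk), mul_zero]
      rw [h0, zero_add, Finset.sum_Ico_eq_sum_range]
      have hlen : i + 1 - ρ = (i - ρ) + 1 := by omega
      rw [hlen]
      have hterm : ∀ t ∈ range ((i - ρ) + 1),
          (-1 : ℤ) ^ (i - (ρ + t)) * ((d - (ρ + t)).choose (i - (ρ + t)) : ℤ) *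
            (if ρ ≤ ρ + t then ((d - ρ).choose (ρ + t - ρ) : ℤ) else 0)
          = (-1 : ℤ) ^ ((i - ρ) - t) * (((d - ρ) - t).choose ((i - ρ) - t) : ℤ) *
              (((d - ρ).choose t : ℤ)) := by
        intro t ht
        have e1 : i - (ρ + t) = (i - ρ) - t := by omega
        have e2 : d - (ρ + t) = (d - ρ) - t := by omega
        have e3 : ρ + t - ρ = t := by omega
        rw [if_pos (Nat.le_add_right _ _), e1, e2, e3]
      rw [Finset.sum_congr rfl hterm, key1 (d - ρ) (i - ρ) (by omega)]
      split_ifs with h1 h2 <;> first | rfl | omega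
    · rw [if_neg (by omega)]
      refine Finset.sum_eq_zero fun k hk => ?_
      rw [mem_range, Nat.lt_succ_iff] at hk
      rw [if_neg (by omega), mul_zero]
  rw [Finset.sum_congr rfl fun j _ => hinner j, Finset.sum_boole]
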